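/- Let f : ℝⁿ → ℝ be a multivariate polynomial, b ∈ ℝⁿ a baseline point and x ∈ ℝⁿ an input. For every i ∈ N, the Integrated Gradients attribution satisfies (x_i − b_i) · ∫_0^1 (∂f/∂x_i)(b + α(x − b)) dα = ∑_{κ ∈ Ω_i} φ(κ) + ∑_{S ⊆ N, |S| > 1, i ∈ S} ∑_{κ ∈ Ω_S} (κ_i / ∑_{j ∈ N} κ_j) · I(κ). -/

import Mathlib

open Finset

theorem fderiv_eval {n : ℕ} (q : MvPolynomial (Fin n) ℝ) (b p : Fin n → ℝ) (i : Fin n) :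
    fderiv ℝ (fun y : Fin n → ℝ => ∑ κ ∈ q.support,
        MvPolynomial.coeff κ q * ∏ j, (y j - b j) ^ κ j) p (Pi.single i 1)
      = ∑ κ ∈ q.support, MvPolynomial.coeff κ q *
          ((κ i : ℝ) * (p i - b i) ^ (κ i - 1) *
            ∏ j ∈ univ.erase i, (p j - b j) ^ κ j) := by
  classical
  have hfac : ∀ (κ : Fin n →₀ ℕ) (j : Fin n),
      HasFDerivAt (fun y : Fin n → ℝ => (y j - b j) ^ κ j)
        (((κ j : ℝ) * (p j - b j) ^ (κ j - 1)) • (ContinuousLinearMap.proj j : (Fin n → ℝ) →L[ℝ] ℝ)) p := by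
    intro κ j
    exact (hasDerivAt_pow (κ j) (p j - b j)).comp_hasFDerivAt p
      ((hasFDerivAt_apply j p).sub_const (b j))
  have hmain : HasFDerivAt (fun y : Fin n → ℝ => ∑ κ ∈ q.support,
      MvPolynomial.coeff κ q * ∏ j, (y j - b j) ^ κ j)
      (∑ κ ∈ q.support, MvPolynomial.coeff κ q •
        ∑ j, (∏ k ∈ univ.erase j, (p k - b k) ^ κ k) •
          (((κ j : ℝ) * (p j - b j) ^ (κ j - 1)) • (ContinuousLinearMap.proj j : (Fin n → ℝ) →L[ℝ] ℝ))) p := by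
    apply HasFDerivAt.fun_sum
    intro κ _
    exact (HasFDerivAt.finset_prod (fun j _ => hfac κ j)).const_mul _
  rw [hmain.fderiv]
  simp only [ContinuousLinearMap.sum_apply, ContinuousLinearMap.smul_apply,
    ContinuousLinearMap.proj_apply, smul_eq_mul]
  refine Finset.sum_congr rfl fun κ _ => ?_
  rw [Finset.sum_eq_single i]
  · simp [Pi.single_eq_same]; left; ring
  · intro j _ hj
    simp [Pi.single_eq_of_ne hj]
  · simp

theorem per_kappa {n : ℕ} (x b : Fin n → ℝ) (i : Fin n) (κ : Fin n →₀ ℕ) :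
    (x i - b i) * ∫ α in (0:ℝ)..1, (κ i : ℝ) * (α * (x i - b i)) ^ (κ i - 1) *
        ∏ j ∈ univ.erase i, (α * (x j - b j)) ^ κ j
      = ((κ i : ℝ) / ∑ j, (κ j : ℝ)) * ∏ j, (x j - b j) ^ κ j := by
  classical
  rcases Nat.eq_zero_or_pos (κ i) with h0 | hpos
  · simp [h0]
  set C : ℝ := (κ i : ℝ) * (x i - b i) ^ (κ i - 1) * ∏ j ∈ univ.erase i, (x j - b j) ^ κ j
    with hC
  set e : ℕ := (κ i - 1) + ∑ j ∈ univ.erase i, κ j with he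
  have hint : ∀ α : ℝ, (κ i : ℝ) * (α * (x i - b i)) ^ (κ i - 1) *
      ∏ j ∈ univ.erase i, (α * (x j - b j)) ^ κ j = C * α ^ e := by
    intro α
    simp only [mul_pow, Finset.prod_mul_distrib, Finset.prod_pow_eq_pow_sum, hC, he, pow_add]
    ring
  have hnat : e + 1 = ∑ j, κ j := by
    rw [he, ← Finset.add_sum_erase univ κ (mem_univ i)]
    omega
  have hsum : ∑ j, (κ j : ℝ) = ((e : ℝ) + 1) := by
    rw_mod_cast [← hnat]
  have hxpow : (x i - b i) * (x i - b i) ^ (κ i - 1) = (x i - b i) ^ κ i := by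
    conv_rhs => rw [show κ i = (κ i - 1) + 1 from (Nat.succ_pred_eq_of_pos hpos).symm]
    rw [pow_succ]; ring
  have hprod : (x i - b i) ^ κ i * ∏ j ∈ univ.erase i, (x j - b j) ^ κ j
      = ∏ j, (x j - b j) ^ κ j := Finset.mul_prod_erase univ (fun j => (x j - b j) ^ κ j) (mem_univ i)
  have hCprod : (x i - b i) * C = (κ i : ℝ) * ∏ j, (x j - b j) ^ κ j := by
    rw [hC, ← hprod, ← hxpow]; ring
  have hepos : (e : ℝ) + 1 ≠ 0 := by positivity
  simp only [hint]
  rw [intervalIntegral.integral_const_mul, integral_pow, hsum]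
  field_simp
  linear_combination hCprod

theorem regroup {n : ℕ} (q : MvPolynomial (Fin n) ℝ) (x b : Fin n → ℝ) (i : Fin n) :
    ∑ κ ∈ q.support,
        ((κ i : ℝ) / ∑ j, (κ j : ℝ)) * (MvPolynomial.coeff κ q * ∏ j, (x j - b j) ^ κ j)
      = (∑ κ ∈ q.support.filter (fun κ => κ.support = {i}),
            MvPolynomial.coeff κ q * ∏ j, (x j - b j) ^ κ j)
        + ∑ S ∈ (univ : Finset (Fin n)).powerset.filter (fun S => 1 < S.card ∧ i ∈ S),
            ∑ κ ∈ q.support.filter (fun κ => κ.support = S),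
              ((κ i : ℝ) / ∑ j, (κ j : ℝ)) *
                (MvPolynomial.coeff κ q * ∏ j, (x j - b j) ^ κ j) := by
  classical
  set g : (Fin n →₀ ℕ) → ℝ := fun κ =>
    ((κ i : ℝ) / ∑ j, (κ j : ℝ)) * (MvPolynomial.coeff κ q * ∏ j, (x j - b j) ^ κ j) with hg
  have hmaps : ∀ κ ∈ q.support, κ.support ∈ (univ : Finset (Fin n)).powerset := by
    intro κ _; simp
  rw [← Finset.sum_fiberwise_of_maps_to hmaps g,
    ← Finset.sum_filter_add_sum_filter_not ((univ : Finset (Fin n)).powerset)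
      (fun S => 1 < S.card ∧ i ∈ S), add_comm]
  congr 1
  -- the non-interaction part reduces to S = {i}
  rw [Finset.sum_eq_single_of_mem ({i} : Finset (Fin n))]
  · -- inner sum over support = {i} has ratio one
    apply Finset.sum_congr rfl
    intro κ hκ
    rw [Finset.mem_filter] at hκ
    have hsupp : κ.support = {i} := hκ.2
    have hzero : ∀ j, j ≠ i → κ j = 0 := by
      intro j hj
      by_contra h
      have : j ∈ κ.support := Finsupp.mem_support_iff.mpr h
      rw [hsupp, Finset.mem_singleton] at this; exact hj this
    have hki : κ i ≠ 0 := by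
      have : i ∈ κ.support := by rw [hsupp]; exact Finset.mem_singleton_self i
      exact Finsupp.mem_support_iff.mp this
    have hsum : ∑ j, (κ j : ℝ) = (κ i : ℝ) := by
      rw [Finset.sum_eq_single i (fun j _ hj => by rw [hzero j hj]; simp) (by simp)]
    rw [hg]
    simp only [hsum]
    rw [div_self (by exact_mod_cast hki), one_mul]
  · simp
  · intro S hS hne
    rw [Finset.mem_filter] at hS
    have hnP : ¬(1 < S.card ∧ i ∈ S) := hS.2
    by_cases hiS : i ∈ S
    · exfalso
      have h1 : 1 ≤ S.card := Finset.card_pos.mpr ⟨i, hiS⟩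
      have h2 : ¬ 1 < S.card := fun h => hnP ⟨h, hiS⟩
      have hcard : S.card = 1 := le_antisymm (not_lt.mp h2) h1
      obtain ⟨a, ha⟩ := Finset.card_eq_one.mp hcard
      rw [ha, Finset.mem_singleton] at hiS
      exact hne (by rw [ha, hiS])
    · apply Finset.sum_eq_zero
      intro κ hκ
      rw [Finset.mem_filter] at hκ
      have : κ i = 0 := by
        by_contra h
        exact hiS (hκ.2 ▸ Finsupp.mem_support_iff.mpr h)
      simp [hg, this]

/-- Integrated Gradients.  For a polynomial `f : ℝⁿ → ℝ` with expansion `q`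
in powers of `x − b`, the Integrated Gradients attribution of variable `i` equals the
independent effects of `i` plus, for every interaction pattern `κ` involving `i`, the ratio
`κ_i / ∑_j κ_j` of the Taylor interaction effect `I(κ)`. -/
theorem integrated_gradients {n : ℕ} (hn : 1 ≤ n) (f : (Fin n → ℝ) → ℝ)
    (q : MvPolynomial (Fin n) ℝ) (b x : Fin n → ℝ)
    (hf : ∀ y : Fin n → ℝ,
      f y = ∑ κ ∈ q.support, MvPolynomial.coeff κ q * ∏ i, (y i - b i) ^ κ i)
    (i : Fin n) :
    (x i - b i) *
        ∫ α in (0:ℝ)..1,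
          fderiv ℝ f (fun j => b j + α * (x j - b j)) (Pi.single i 1)
      = (∑ κ ∈ q.support.filter (fun κ => κ.support = {i}),
            MvPolynomial.coeff κ q * ∏ j, (x j - b j) ^ κ j)
        + ∑ S ∈ (univ : Finset (Fin n)).powerset.filter (fun S => 1 < S.card ∧ i ∈ S),
            ∑ κ ∈ q.support.filter (fun κ => κ.support = S),
              ((κ i : ℝ) / ∑ j, (κ j : ℝ)) *
                (MvPolynomial.coeff κ q * ∏ j, (x j - b j) ^ κ j) := by
  classical
  have hfe : f = fun y => ∑ κ ∈ q.support,
      MvPolynomial.coeff κ q * ∏ j, (y j - b j) ^ κ j := funext hf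
  rw [hfe]
  have hInt : ∀ α : ℝ,
      fderiv ℝ (fun y : Fin n → ℝ => ∑ κ ∈ q.support,
          MvPolynomial.coeff κ q * ∏ j, (y j - b j) ^ κ j)
        (fun j => b j + α * (x j - b j)) (Pi.single i 1)
      = ∑ κ ∈ q.support, MvPolynomial.coeff κ q *
          ((κ i : ℝ) * (α * (x i - b i)) ^ (κ i - 1) *
            ∏ j ∈ univ.erase i, (α * (x j - b j)) ^ κ j) := by
    intro α
    rw [fderiv_eval]
    simp only [add_sub_cancel_left]
  simp only [hInt]
  rw [intervalIntegral.integral_finset_sum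
    (fun κ _ => Continuous.intervalIntegrable (by fun_prop) _ _)]
  rw [Finset.mul_sum]
  rw [Finset.sum_congr rfl (fun κ _ => ?_), regroup q x b i]
  rw [intervalIntegral.integral_const_mul, mul_left_comm, per_kappa]
  ring
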